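/- Let S be a finite perfect group whose quotient S/Z(S) by its center is a nonabelian simple group, and suppose every automorphism of S/Z(S) is induced by an automorphism of S. In the direct product P = ∏_{(a,b) ∈ S×S} S (one copy of S for each ordered pair of elements of S), let h₁ be the element with coordinate a at position (a,b), let h₂ be the element with coordinate b at position (a,b), and let H = ⟨h₁, h₂⟩ ≤ P. Then for every function c : S × S → S satisfying (i) c(a,b) = 1 whenever ⟨a,b⟩ ≠ S, and (ii) c(φ(a)z₁, φ(b)z₂) = φ(c(a,b)) for every automorphism φ of S, all central elements z₁, z₂ ∈ Z(S), and all a,b ∈ S, the element c lies in H. -/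

import Mathlib

open Subgroup Function
open scoped Pointwise commutatorElement

namespace DiagAux

variable {G : Type*} [Group G]

lemma central_swap {z : G} (hz : z ∈ Subgroup.center G) (g : G) : g * z = z * g :=
  Subgroup.mem_center_iff.mp hz g

lemma conj_mul_central {a z : G} (hz : z ∈ Subgroup.center G) (x : G) :
    (a * z) * x * (a * z)⁻¹ = a * x * a⁻¹ := by
  have h1 : z * x * z⁻¹ = x := by rw [← central_swap hz x]; group
  rw [mul_inv_rev]
  calc a * z * x * (z⁻¹ * a⁻¹) = a * (z * x * z⁻¹) * a⁻¹ := by group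
  _ = a * x * a⁻¹ := by rw [h1]

lemma commutator_mul_central {a b z w : G} (hz : z ∈ Subgroup.center G)
    (hw : w ∈ Subgroup.center G) : ⁅a * z, b * w⁆ = ⁅a, b⁆ := by
  have h2 : w * a⁻¹ * w⁻¹ = a⁻¹ := by rw [← central_swap hw a⁻¹]; group
  calc ⁅a * z, b * w⁆ = ((a * z) * (b * w) * (a * z)⁻¹) * (b * w)⁻¹ := by
        rw [commutatorElement_def]
  _ = (a * (b * w) * a⁻¹) * (b * w)⁻¹ := by rw [conj_mul_central hz]
  _ = a * b * (w * a⁻¹ * w⁻¹) * b⁻¹ := by rw [mul_inv_rev]; group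
  _ = a * b * a⁻¹ * b⁻¹ := by rw [h2]
  _ = ⁅a, b⁆ := (commutatorElement_def a b).symm

lemma eq_top_of_sup_center (hperf : commutator G = ⊤) {C : Subgroup G}
    (h : C ⊔ Subgroup.center G = ⊤) : C = ⊤ := by
  have hle : ⁅(⊤ : Subgroup G), (⊤ : Subgroup G)⁆ ≤ C := by
    rw [← h, Subgroup.commutator_le]
    intro x hx y hy
    have hx2 : x ∈ ((C : Set G) * (Subgroup.center G : Set G)) := by
      rw [← Subgroup.mul_normal C (Subgroup.center G)]; exact hx
    have hy2 : y ∈ ((C : Set G) * (Subgroup.center G : Set G)) := by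
      rw [← Subgroup.mul_normal C (Subgroup.center G)]; exact hy
    obtain ⟨cx, hcx, zx, hzx, rfl⟩ := hx2
    obtain ⟨cy, hcy, zy, hzy, rfl⟩ := hy2
    rw [commutator_mul_central hzx hzy, commutatorElement_def]
    exact mul_mem (mul_mem (mul_mem hcx hcy) (inv_mem hcx)) (inv_mem hcy)
  rw [eq_top_iff, ← hperf, _root_.commutator_def]
  exact hle

lemma extraction {G T S' ι : Type*} [Group G] [Group T] [Group S']
    [Nontrivial T]
    (hs : ∀ A : Subgroup T, A.Normal → A = ⊥ ∨ A = ⊤)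
    (hZ : Subgroup.center T = ⊥)
    (θ : G →* T) (hθ : Function.Surjective θ)
    (F : Finset ι) (e : ι → (G →* S'))
    (hker : (⨅ i ∈ F, (e i).ker) ≤ θ.ker) :
    ∃ i ∈ F, (e i).ker ≤ θ.ker := by
  classical
  induction F using Finset.cons_induction with
  | empty =>
    exfalso
    obtain ⟨t, ht⟩ := exists_ne (1 : T)
    obtain ⟨g, rfl⟩ := hθ t
    have : g ∈ θ.ker := hker (by simp)
    exact ht this
  | cons i₀ F' hi₀ IH =>
    set K := ⨅ i ∈ F', (e i).ker with hKdef
    have hKnormal : K.Normal := by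
      constructor; intro n hn g
      simp only [hKdef, Subgroup.mem_iInf] at hn ⊢
      intro i hi
      exact ((e i).normal_ker).conj_mem n (hn i hi) g
    rcases hs (K.map θ) (hKnormal.map θ hθ) with hb | ht
    · have hK' : K ≤ θ.ker := (Subgroup.map_eq_bot_iff _).mp hb
      obtain ⟨i, hiF, hik⟩ := IH hK'
      exact ⟨i, Finset.mem_cons_of_mem hiF, hik⟩
    · refine ⟨i₀, Finset.mem_cons_self _ _, ?_⟩
      intro d hd
      rw [MonoidHom.mem_ker] at hd
      have hdc : θ d ∈ Subgroup.center T := by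
        rw [Subgroup.mem_center_iff]
        intro t
        have : t ∈ K.map θ := by rw [ht]; trivial
        obtain ⟨k, hk, rfl⟩ := this
        have hk' : ∀ i ∈ F', e i k = 1 := by
          intro i hi
          have h2 : K ≤ (e i).ker := hKdef ▸ iInf₂_le i hi
          exact h2 hk
        have hmem : ⁅d, k⁆ ∈ θ.ker := by
          apply hker
          simp only [Subgroup.mem_iInf]
          intro i hi
          rw [Finset.mem_cons] at hi
          rw [MonoidHom.mem_ker, map_commutatorElement]
          rcases hi with rfl | hi
          · rw [hd]; simp [commutatorElement_def]
          · rw [hk' i hi]; simp [commutatorElement_def]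
        rw [MonoidHom.mem_ker, map_commutatorElement] at hmem
        exact (commutatorElement_eq_one_iff_commute.mp hmem).symm
      rw [hZ] at hdc
      rw [MonoidHom.mem_ker]
      exact Subgroup.mem_bot.mp hdc

lemma normal_le_center_or_eq_top {S : Type*} [Group S]
    (hperf : commutator S = ⊤)
    (hs : ∀ A : Subgroup (S ⧸ Subgroup.center S), A.Normal → A = ⊥ ∨ A = ⊤)
    {N : Subgroup S} (hN : N.Normal) :
    N ≤ Subgroup.center S ∨ N = ⊤ := by
  set mkq := QuotientGroup.mk' (Subgroup.center S) with hmkq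
  have hsurj : Surjective mkq := QuotientGroup.mk'_surjective _
  rcases hs (N.map mkq) (hN.map mkq hsurj) with hb | ht
  · left
    have := (Subgroup.map_eq_bot_iff _).mp hb
    rwa [QuotientGroup.ker_mk'] at this
  · right
    apply eq_top_of_sup_center hperf
    have h1 := Subgroup.comap_map_eq mkq N
    rw [ht, Subgroup.comap_top, QuotientGroup.ker_mk'] at h1
    exact h1.symm

end DiagAux

section MainDefs

variable (S : Type) [Group S]

def theH : Subgroup (S × S → S) :=
  Subgroup.closure ({fun p : S × S => p.1, fun p : S × S => p.2} : Set (S × S → S))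

def ev (p : S × S) : (S × S → S) →* S := Pi.evalMonoidHom (fun _ : S × S => S) p

def rel (p q : S × S) : Prop :=
  ∃ φ : MulAut S, ∃ z₁ ∈ Subgroup.center S, ∃ z₂ ∈ Subgroup.center S,
    q = (φ p.1 * z₁, φ p.2 * z₂)

variable {S}

lemma aut_mem_center (φ : MulAut S) {z : S} (hz : z ∈ Subgroup.center S) :
    φ z ∈ Subgroup.center S := by
  rw [Subgroup.mem_center_iff] at hz ⊢
  intro g
  calc g * φ z = φ (φ.symm g * z) := by rw [map_mul, φ.apply_symm_apply]
  _ = φ (z * φ.symm g) := by rw [hz (φ.symm g)]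
  _ = φ z * g := by rw [map_mul, φ.apply_symm_apply]

lemma rel_refl (p : S × S) : rel S p p :=
  ⟨1, 1, one_mem _, 1, one_mem _, by simp⟩

lemma rel_symm {p q : S × S} (h : rel S p q) : rel S q p := by
  obtain ⟨φ, z₁, hz₁, z₂, hz₂, hq⟩ := h
  refine ⟨φ⁻¹, (φ⁻¹ z₁)⁻¹, inv_mem (aut_mem_center _ hz₁),
    (φ⁻¹ z₂)⁻¹, inv_mem (aut_mem_center _ hz₂), ?_⟩
  rw [hq]
  have e1 : (φ⁻¹ : MulAut S) (φ p.1 * z₁) * ((φ⁻¹ : MulAut S) z₁)⁻¹ = p.1 := by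
    rw [map_mul]
    simp
  have e2 : (φ⁻¹ : MulAut S) (φ p.2 * z₂) * ((φ⁻¹ : MulAut S) z₂)⁻¹ = p.2 := by
    rw [map_mul]
    simp
  exact Prod.ext e1.symm e2.symm

lemma rel_trans {p q r : S × S} (hpq : rel S p q) (hqr : rel S q r) : rel S p r := by
  obtain ⟨φ, z₁, hz₁, z₂, hz₂, rfl⟩ := hpq
  obtain ⟨φ', w₁, hw₁, w₂, hw₂, rfl⟩ := hqr
  refine ⟨φ' * φ, φ' z₁ * w₁, mul_mem (aut_mem_center _ hz₁) hw₁,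
    φ' z₂ * w₂, mul_mem (aut_mem_center _ hz₂) hw₂, ?_⟩
  refine Prod.ext ?_ ?_ <;> simp [map_mul, mul_assoc]

lemma rel_gen (hperf : commutator S = ⊤) {p q : S × S} (h : rel S p q)
    (hp : Subgroup.closure {p.1, p.2} = ⊤) : Subgroup.closure {q.1, q.2} = ⊤ := by
  obtain ⟨φ, z₁, hz₁, z₂, hz₂, rfl⟩ := h
  show Subgroup.closure {φ p.1 * z₁, φ p.2 * z₂} = ⊤
  set C := Subgroup.closure {φ p.1 * z₁, φ p.2 * z₂} with hC
  apply DiagAux.eq_top_of_sup_center hperf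
  rw [eq_top_iff]
  have htop : Subgroup.closure {φ p.1, φ p.2} = ⊤ := by
    have hmap := MonoidHom.map_closure φ.toMonoidHom {p.1, p.2}
    rw [Set.image_insert_eq, Set.image_singleton, hp, MulEquiv.coe_toMonoidHom] at hmap
    rw [← hmap]
    exact Subgroup.map_top_of_surjective _ φ.surjective
  rw [← htop]
  apply (Subgroup.closure_le _).mpr
  have hmem : ∀ u w : S, w ∈ Subgroup.center S → u * w ∈ C →
      u ∈ C ⊔ Subgroup.center S := by
    intro u w hw hc
    have huw : u = (u * w) * w⁻¹ := by rw [mul_inv_cancel_right]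
    rw [huw]
    exact mul_mem ((le_sup_left : C ≤ C ⊔ Subgroup.center S) hc)
      ((le_sup_right : Subgroup.center S ≤ C ⊔ Subgroup.center S) (inv_mem hw))
  rintro x hx
  rcases hx with rfl | hx
  · exact hmem (φ p.1) z₁ hz₁ (Subgroup.subset_closure (Set.mem_insert _ _))
  · rcases hx with rfl
    exact hmem (φ p.2) z₂ hz₂ (Subgroup.subset_closure (Set.mem_insert_of_mem _ rfl))

lemma map_ev_theH (p : S × S) : (theH S).map (ev S p) = Subgroup.closure {p.1, p.2} := by
  rw [theH, MonoidHom.map_closure]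
  congr 1
  rw [Set.image_insert_eq, Set.image_singleton]
  rfl

lemma map_ev_comm_top (hperf : commutator S = ⊤) {p : S × S}
    (hp : Subgroup.closure {p.1, p.2} = ⊤) :
    (⁅theH S, theH S⁆).map (ev S p) = ⊤ := by
  rw [Subgroup.map_commutator, map_ev_theH, hp, ← _root_.commutator_def]
  exact hperf

lemma commutator_coord (φ : MulAut S) {z₁ z₂ : S} (hz₁ : z₁ ∈ Subgroup.center S)
    (hz₂ : z₂ ∈ Subgroup.center S) (p : S × S) {h : S × S → S}
    (hh : h ∈ ⁅theH S, theH S⁆) :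
    h (φ p.1 * z₁, φ p.2 * z₂) = φ (h p) := by
  set α := ev S (φ p.1 * z₁, φ p.2 * z₂) with hα
  set β := φ.toMonoidHom.comp (ev S p) with hβ
  set mkq := QuotientGroup.mk' (Subgroup.center S) with hmkq
  have hH : theH S ≤ MonoidHom.eqLocus (mkq.comp β) (mkq.comp α) := by
    rw [theH]
    apply (Subgroup.closure_le _).mpr
    rintro f hf
    rcases hf with rfl | hf
    · show mkq (β _) = mkq (α _)
      rw [QuotientGroup.mk'_eq_mk']
      exact ⟨z₁, hz₁, rfl⟩
    · rcases hf with rfl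
      show mkq (β _) = mkq (α _)
      rw [QuotientGroup.mk'_eq_mk']
      exact ⟨z₂, hz₂, rfl⟩
  have key : ⁅theH S, theH S⁆ ≤ MonoidHom.eqLocus α β := by
    rw [Subgroup.commutator_le]
    intro g₁ hg₁ g₂ hg₂
    have e₁ : mkq (β g₁) = mkq (α g₁) := hH hg₁
    have e₂ : mkq (β g₂) = mkq (α g₂) := hH hg₂
    rw [QuotientGroup.mk'_eq_mk'] at e₁ e₂
    obtain ⟨u₁, hu₁, hval₁⟩ := e₁
    obtain ⟨u₂, hu₂, hval₂⟩ := e₂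
    show α ⁅g₁, g₂⁆ = β ⁅g₁, g₂⁆
    rw [map_commutatorElement, map_commutatorElement, ← hval₁, ← hval₂,
      DiagAux.commutator_mul_central hu₁ hu₂]
  exact key hh

end MainDefs

section Core

variable {S : Type} [Group S] [Fintype S]

def Dsub (S : Type) [Group S] (a b : S) : Subgroup (S × S → S) :=
  ⨅ (p : S × S) (_ : ¬ rel S (a, b) p), (ev S p).ker

lemma core (hperf : commutator S = ⊤)
    (hsimple : IsSimpleGroup (S ⧸ Subgroup.center S))
    (hnonab : ∃ x y : S ⧸ Subgroup.center S, x * y ≠ y * x)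
    (hlift : ∀ ψ : MulAut (S ⧸ Subgroup.center S), ∃ φ : MulAut S,
      ∀ x : S, ψ (QuotientGroup.mk x) = QuotientGroup.mk (φ x))
    {a b : S} (hab : Subgroup.closure {a, b} = ⊤) :
    ((⁅theH S, theH S⁆) ⊓ Dsub S a b).map (ev S (a, b)) = ⊤ := by
  classical
  haveI : Nontrivial (S ⧸ Subgroup.center S) := hsimple.toNontrivial
  set Z := Subgroup.center S with hZdef
  set mkq := QuotientGroup.mk' Z with hmkq
  have hmksurj : Function.Surjective mkq := QuotientGroup.mk'_surjective Z
  set H₀ := ⁅theH S, theH S⁆ with hH₀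
  set N := (H₀ ⊓ Dsub S a b).map (ev S (a, b)) with hN
  have hZT : Subgroup.center (S ⧸ Z) = ⊥ := by
    rcases hsimple.eq_bot_or_eq_top_of_normal (Subgroup.center _) inferInstance
      with h | h
    · exact h
    · exfalso
      obtain ⟨x, y, hxy⟩ := hnonab
      have hx : x ∈ Subgroup.center (S ⧸ Z) := by rw [h]; trivial
      exact hxy (Subgroup.mem_center_iff.mp hx y).symm
  -- surjectivity of H₀ onto each generating coordinate
  have hH0surj : ∀ {u v : S} (huv : Subgroup.closure {u, v} = ⊤) (s : S),
      ∃ h ∈ H₀, ev S (u, v) h = s := by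
    intro u v huv s
    have htop := map_ev_comm_top (S := S) hperf (p := (u, v)) huv
    have : s ∈ (H₀.map (ev S (u, v))) := by rw [hH₀, htop]; trivial
    obtain ⟨h, hh, hhs⟩ := this
    exact ⟨h, hh, hhs⟩
  have hDmem : ∀ g : S × S → S, g ∈ Dsub S a b ↔ ∀ p, ¬ rel S (a, b) p → g p = 1 := by
    intro g
    constructor
    · intro hg p hp
      have h2 : Dsub S a b ≤ (ev S p).ker := iInf₂_le p hp
      exact h2 hg
    · intro hg
      rw [Dsub, Subgroup.mem_iInf]
      intro p
      rw [Subgroup.mem_iInf]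
      intro hp
      exact hg p hp
  have hNnormal : N.Normal := by
    constructor
    intro n hn g
    rw [hN, Subgroup.mem_map] at hn
    obtain ⟨x, hx, rfl⟩ := hn
    rw [Subgroup.mem_inf] at hx
    obtain ⟨h, hh, rfl⟩ := hH0surj hab g
    rw [hN, Subgroup.mem_map]
    refine ⟨h * x * h⁻¹, Subgroup.mem_inf.mpr ⟨mul_mem (mul_mem hh hx.1) (inv_mem hh), ?_⟩, by
      simp [map_mul, map_inv]⟩
    rw [hDmem]
    intro p hp
    have hxp : x p = 1 := (hDmem x).mp hx.2 p hp
    show h p * x p * (h p)⁻¹ = 1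
    rw [hxp, mul_one, mul_inv_cancel]
  rcases DiagAux.normal_le_center_or_eq_top hperf hsimple.eq_bot_or_eq_top_of_normal hNnormal
    with hNle | hNtop
  swap
  · exact hNtop
  exfalso
  -- extraction setup
  let θ : ↥H₀ →* S ⧸ Z := (mkq.comp (ev S (a, b))).comp H₀.subtype
  have hθsurj : Function.Surjective θ := by
    intro t
    obtain ⟨s, rfl⟩ := hmksurj t
    obtain ⟨h, hh, hev⟩ := hH0surj hab s
    exact ⟨⟨h, hh⟩, by simp [θ, hev]⟩
  let e : S × S → (↥H₀ →* S) := fun p => (ev S p).comp H₀.subtype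
  have hFP : (⨅ p ∈ Finset.univ.filter (fun p : S × S => ¬ rel S (a, b) p), (e p).ker)
      ≤ θ.ker := by
    intro x hx
    have hxD : (x : S × S → S) ∈ Dsub S a b := by
      rw [hDmem]
      intro p hp
      have h2 : (⨅ p ∈ Finset.univ.filter (fun p : S × S => ¬ rel S (a, b) p), (e p).ker)
          ≤ (e p).ker := iInf₂_le p (by simp [hp])
      exact h2 hx
    have hmem : ev S (a, b) (x : S × S → S) ∈ N :=
      ⟨(x : S × S → S), Subgroup.mem_inf.mpr ⟨x.2, hxD⟩, rfl⟩
    have hZmem : ev S (a, b) (x : S × S → S) ∈ Z := hNle hmem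
    show θ x = 1
    have : θ x = mkq (ev S (a, b) (x : S × S → S)) := rfl
    rw [this, ← MonoidHom.mem_ker, QuotientGroup.ker_mk']
    exact hZmem
  obtain ⟨p₀, hp₀mem, hker₀⟩ := DiagAux.extraction hsimple.eq_bot_or_eq_top_of_normal hZT
    θ hθsurj _ e hFP
  have hp₀ : ¬ rel S (a, b) p₀ := (Finset.mem_filter.mp hp₀mem).2
  have hkey : ∀ h : S × S → S, h ∈ H₀ → h p₀ = 1 → mkq (h (a, b)) = 1 := by
    intro h hh h1
    have hk : (⟨h, hh⟩ : ↥H₀) ∈ (e p₀).ker := by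
      rw [MonoidHom.mem_ker]
      exact h1
    exact hker₀ hk
  -- the pair homomorphism
  let Φ : (S × S → S) →* (S ⧸ Z) × (S ⧸ Z) := (mkq.comp (ev S (a, b))).prod (mkq.comp (ev S p₀))
  set V' := H₀.map Φ with hV'
  set Ybar := (theH S).map Φ with hYbar
  have hV'Y : V' = ⁅Ybar, Ybar⁆ := by
    rw [hV', hYbar, hH₀, Subgroup.map_commutator]
  have hfstV : ∀ t : S ⧸ Z, ∃ v ∈ V', v.1 = t := by
    intro t
    obtain ⟨s, rfl⟩ := hmksurj t
    obtain ⟨h, hh, hev⟩ := hH0surj hab s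
    refine ⟨Φ h, ⟨h, hh, rfl⟩, ?_⟩
    show mkq (ev S (a, b) h) = mkq s
    rw [hev]
  let A : Subgroup (S ⧸ Z) := V'.comap (MonoidHom.inl (S ⧸ Z) (S ⧸ Z))
  have hAnormal : A.Normal := by
    constructor
    intro t ht u
    obtain ⟨v, hv, hv1⟩ := hfstV u
    have hmem : v * ((t : S ⧸ Z), (1 : S ⧸ Z)) * v⁻¹ ∈ V' := mul_mem (mul_mem hv ht) (inv_mem hv)
    have heq : v * ((t : S ⧸ Z), (1 : S ⧸ Z)) * v⁻¹ = (u * t * u⁻¹, 1) := by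
      rw [← hv1]
      ext <;> simp
    show MonoidHom.inl _ _ (u * t * u⁻¹) ∈ V'
    have : MonoidHom.inl (S ⧸ Z) (S ⧸ Z) (u * t * u⁻¹) = (u * t * u⁻¹, 1) := rfl
    rw [this, ← heq]
    exact hmem
  rcases hsimple.eq_bot_or_eq_top_of_normal A hAnormal with hAbot | hAtop
  · -- A = ⊥ : graph case
    have hsndinj : ∀ v ∈ V', ∀ w ∈ V', v.2 = w.2 → v = w := by
      intro v hv w hw h2
      have hmem : v * w⁻¹ ∈ V' := mul_mem hv (inv_mem hw)
      have h21 : (v * w⁻¹).2 = 1 := by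
        show v.2 * w.2⁻¹ = 1
        rw [h2, mul_inv_cancel]
      have hA : (v * w⁻¹).1 ∈ A := by
        show MonoidHom.inl _ _ ((v * w⁻¹).1) ∈ V'
        have : MonoidHom.inl (S ⧸ Z) (S ⧸ Z) ((v * w⁻¹).1) = v * w⁻¹ := by
          ext
          · rfl
          · exact h21.symm
        rw [this]
        exact hmem
      rw [hAbot] at hA
      have h11 : (v * w⁻¹).1 = 1 := Subgroup.mem_bot.mp hA
      have : v * w⁻¹ = 1 := Prod.ext h11 h21
      exact mul_inv_eq_one.mp this
    -- snd image is everything, by counting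
    haveI : Finite (S ⧸ Z) := Quotient.finite _
    have hsndtop : V'.map (MonoidHom.snd _ _) = ⊤ := by
      apply Subgroup.eq_top_of_card_eq
      have hinj : Function.Injective
          ((MonoidHom.snd (S ⧸ Z) (S ⧸ Z)).subgroupMap V') := by
        intro v w hvw
        have : ((v : (S ⧸ Z) × (S ⧸ Z))).2 = ((w : (S ⧸ Z) × (S ⧸ Z))).2 :=
          congrArg Subtype.val hvw
        exact Subtype.ext (hsndinj _ v.2 _ w.2 this)
      have hsurj2 : Function.Surjective
          ((MonoidHom.snd (S ⧸ Z) (S ⧸ Z)).subgroupMap V') :=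
        MonoidHom.subgroupMap_surjective _ _
      have hcard1 : Nat.card ↥V' = Nat.card ↥(V'.map (MonoidHom.snd _ _)) :=
        Nat.card_eq_of_bijective _ ⟨hinj, hsurj2⟩
      have hfstsurj : Function.Surjective (fun v : ↥V' => (v : (S ⧸ Z) × (S ⧸ Z)).1) := by
        intro t
        obtain ⟨v, hv, hv1⟩ := hfstV t
        exact ⟨⟨v, hv⟩, hv1⟩
      have hcard2 : Nat.card (S ⧸ Z) ≤ Nat.card ↥V' :=
        Nat.card_le_card_of_surjective _ hfstsurj
      have hcard3 : Nat.card ↥(V'.map (MonoidHom.snd _ _)) ≤ Nat.card (S ⧸ Z) :=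
        Nat.card_le_card_of_injective _ Subtype.val_injective
      omega
    have hMtop : (H₀.map (ev S p₀)) ⊔ Z = ⊤ := by
      have hcomp : mkq.comp (ev S p₀) = (MonoidHom.snd _ _).comp Φ := rfl
      have h1 : (H₀.map (ev S p₀)).map mkq = ⊤ := by
        rw [Subgroup.map_map, hcomp, ← Subgroup.map_map, ← hV']
        exact hsndtop
      have h2 := Subgroup.comap_map_eq mkq (H₀.map (ev S p₀))
      rw [h1, Subgroup.comap_top, QuotientGroup.ker_mk'] at h2
      exact h2.symm
    -- build the automorphism ψ
    let e₂ : ↥V' →* S ⧸ Z := (MonoidHom.snd _ _).comp V'.subtype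
    have he₂inj : Function.Injective e₂ := by
      intro v w hvw
      exact Subtype.ext (hsndinj _ v.2 _ w.2 hvw)
    have he₂surj : Function.Surjective e₂ := by
      intro t
      have : t ∈ V'.map (MonoidHom.snd _ _) := by rw [hsndtop]; trivial
      obtain ⟨v, hv, hvt⟩ := this
      exact ⟨⟨v, hv⟩, hvt⟩
    let βe := MulEquiv.ofBijective e₂ ⟨he₂inj, he₂surj⟩
    let ψ₀ : (S ⧸ Z) →* (S ⧸ Z) :=
      ((MonoidHom.fst _ _).comp V'.subtype).comp βe.symm.toMonoidHom
    have hψ₀ : ∀ v : ↥V', ψ₀ ((v : (S ⧸ Z) × (S ⧸ Z)).2) = (v : (S ⧸ Z) × (S ⧸ Z)).1 := by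
      intro v
      have h1 : βe.symm (e₂ v) = v := by
        apply βe.injective
        rw [MulEquiv.apply_symm_apply]
        rfl
      show ((MonoidHom.fst _ _).comp V'.subtype) (βe.symm (e₂ v)) = _
      rw [h1]
      rfl
    have hψ₀surj : Function.Surjective ψ₀ := by
      intro t
      obtain ⟨v, hv, hv1⟩ := hfstV t
      exact ⟨v.2, (hψ₀ ⟨v, hv⟩).trans hv1⟩
    have hψ₀inj : Function.Injective ψ₀ := Finite.injective_iff_surjective.mpr hψ₀surj
    let ψ : MulAut (S ⧸ Z) := MulEquiv.ofBijective ψ₀ ⟨hψ₀inj, hψ₀surj⟩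
    have hgraph : ∀ v ∈ V', Prod.fst v = ψ v.2 := by
      intro v hv
      exact (hψ₀ ⟨v, hv⟩).symm
    -- conjugation stability
    have hconj : ∀ y ∈ Ybar, ∀ v ∈ V', y * v * y⁻¹ ∈ V' := by
      intro y hy v hv
      have hmapY : Ybar.map (MulAut.conj y).toMonoidHom = Ybar := by
        apply le_antisymm
        · rintro x ⟨w, hw, rfl⟩
          show y * w * y⁻¹ ∈ Ybar
          exact mul_mem (mul_mem hy hw) (inv_mem hy)
        · intro x hx
          refine ⟨y⁻¹ * x * y, mul_mem (mul_mem (inv_mem hy) hx) hy, ?_⟩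
          show y * (y⁻¹ * x * y) * y⁻¹ = x
          simp [mul_assoc]
      have hmapV : V'.map (MulAut.conj y).toMonoidHom = V' := by
        rw [hV'Y, Subgroup.map_commutator, hmapY, ← hV'Y]
      rw [← hmapV]
      exact ⟨v, hv, rfl⟩
    have hYgraph : ∀ y ∈ Ybar, Prod.fst y = ψ y.2 := by
      intro y hy
      have hcen : (ψ y.2)⁻¹ * y.1 ∈ Subgroup.center (S ⧸ Z) := by
        rw [Subgroup.mem_center_iff]
        intro t
        obtain ⟨τ, rfl⟩ := ψ.surjective t
        obtain ⟨vv, hvveq⟩ := he₂surj τ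
        have hv2 : (vv : (S ⧸ Z) × (S ⧸ Z)).2 = τ := hvveq
        have hv1 : (vv : (S ⧸ Z) × (S ⧸ Z)).1 = ψ τ := by
          rw [hgraph _ vv.2, hv2]
        have hcj := hconj y hy _ vv.2
        have hgr := hgraph _ hcj
        have hc1 : (y * (vv : (S ⧸ Z) × (S ⧸ Z)) * y⁻¹).1 = y.1 * ψ τ * y.1⁻¹ := by
          show y.1 * (vv : (S ⧸ Z) × (S ⧸ Z)).1 * y.1⁻¹ = _
          rw [hv1]
        have hc2 : (y * (vv : (S ⧸ Z) × (S ⧸ Z)) * y⁻¹).2 = y.2 * τ * y.2⁻¹ := by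
          show y.2 * (vv : (S ⧸ Z) × (S ⧸ Z)).2 * y.2⁻¹ = _
          rw [hv2]
        rw [hc1, hc2] at hgr
        have hps : ψ (y.2 * τ * y.2⁻¹) = ψ y.2 * ψ τ * (ψ y.2)⁻¹ := by
          rw [map_mul, map_mul, map_inv]
        rw [hps] at hgr
        -- hgr : y.1 * ψ τ * y.1⁻¹ = ψ y.2 * ψ τ * (ψ y.2)⁻¹
        have := hgr
        calc ψ τ * ((ψ y.2)⁻¹ * y.1)
            = (ψ y.2)⁻¹ * (ψ y.2 * ψ τ * (ψ y.2)⁻¹) * y.1 := by group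
        _ = (ψ y.2)⁻¹ * (y.1 * ψ τ * y.1⁻¹) * y.1 := by rw [← this]
        _ = (ψ y.2)⁻¹ * y.1 * ψ τ := by group
      rw [hZT] at hcen
      have := Subgroup.mem_bot.mp hcen
      have h2 : ψ y.2 = y.1 := by
        rw [← inv_mul_eq_one]
        exact this
      exact h2.symm
    -- apply to generators
    have hh₁Y : Φ (fun p : S × S => p.1) ∈ Ybar :=
      ⟨_, Subgroup.subset_closure (Set.mem_insert _ _), rfl⟩
    have hh₂Y : Φ (fun p : S × S => p.2) ∈ Ybar :=
      ⟨_, Subgroup.subset_closure (Set.mem_insert_of_mem _ rfl), rfl⟩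
    have ha' : mkq a = ψ (mkq p₀.1) := hYgraph _ hh₁Y
    have hb' : mkq b = ψ (mkq p₀.2) := hYgraph _ hh₂Y
    obtain ⟨φ, hφ⟩ := hlift ψ
    apply hp₀
    apply rel_symm
    have hza : (φ p₀.1)⁻¹ * a ∈ Z := by
      have h1 : mkq (φ p₀.1) = mkq a := by
        have : mkq (φ p₀.1) = QuotientGroup.mk (φ p₀.1) := rfl
        rw [this, ← hφ p₀.1]
        exact ha'.symm
      rw [QuotientGroup.mk'_eq_mk'] at h1
      obtain ⟨z, hz, hzz⟩ := h1
      have : (φ p₀.1)⁻¹ * a = z := by rw [← hzz]; group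
      rw [this]; exact hz
    have hzb : (φ p₀.2)⁻¹ * b ∈ Z := by
      have h1 : mkq (φ p₀.2) = mkq b := by
        have : mkq (φ p₀.2) = QuotientGroup.mk (φ p₀.2) := rfl
        rw [this, ← hφ p₀.2]
        exact hb'.symm
      rw [QuotientGroup.mk'_eq_mk'] at h1
      obtain ⟨z, hz, hzz⟩ := h1
      have : (φ p₀.2)⁻¹ * b = z := by rw [← hzz]; group
      rw [this]; exact hz
    exact ⟨φ, (φ p₀.1)⁻¹ * a, hza, (φ p₀.2)⁻¹ * b, hzb, by
      refine Prod.ext ?_ ?_ <;> simp [mul_inv_cancel_left]⟩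
  · -- A = ⊤ : commutator contradiction
    obtain ⟨t₁, t₂, hne⟩ := hnonab
    have h₁ : t₁ ∈ A := by rw [hAtop]; trivial
    have h₂ : t₂ ∈ A := by rw [hAtop]; trivial
    obtain ⟨f₁, hf₁, hΦ₁⟩ := h₁
    obtain ⟨f₂, hf₂, hΦ₂⟩ := h₂
    have hc₁ : f₁ p₀ ∈ Z := by
      have := congrArg Prod.snd hΦ₁
      have h2 : mkq (f₁ p₀) = 1 := this
      rw [← MonoidHom.mem_ker, QuotientGroup.ker_mk'] at h2
      exact h2
    have ht₁ : mkq (f₁ (a, b)) = t₁ := congrArg Prod.fst hΦ₁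
    have ht₂ : mkq (f₂ (a, b)) = t₂ := congrArg Prod.fst hΦ₂
    have hk : ⁅f₁, f₂⁆ ∈ H₀ := by
      rw [commutatorElement_def]
      exact mul_mem (mul_mem (mul_mem hf₁ hf₂) (inv_mem hf₁)) (inv_mem hf₂)
    have hkp₀ : ⁅f₁, f₂⁆ p₀ = 1 := by
      show f₁ p₀ * f₂ p₀ * (f₁ p₀)⁻¹ * (f₂ p₀)⁻¹ = 1
      rw [← DiagAux.central_swap hc₁ (f₂ p₀)]
      group
    have hone := hkey _ hk hkp₀
    have hcab : mkq (⁅f₁, f₂⁆ (a, b)) = ⁅t₁, t₂⁆ := by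
      have : ⁅f₁, f₂⁆ (a, b) = ⁅f₁ (a, b), f₂ (a, b)⁆ := rfl
      rw [this, map_commutatorElement, ht₁, ht₂]
    rw [hone] at hcab
    exact hne (commutatorElement_eq_one_iff_commute.mp hcab.symm).eq
end Core

/-- Proposition 6: Let `S` be a finite quasisimple group (perfect with
nonabelian simple central quotient) such that every automorphism of `S/Z(S)` lifts to
an automorphism of `S`. In `P = ∏_{(a,b) ∈ S×S} S`, let `H` be generated by
`h₁ = (a)_{(a,b)}` and `h₂ = (b)_{(a,b)}`. Then every function `c : S × S → S` vanishing
on non-generating pairs and equivariant under automorphisms and central translations lies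
in `H`. -/
theorem diagonal_subgroups_in_H_quasisimple (S : Type) [Group S] [Fintype S]
    (hperf : commutator S = ⊤)
    (hsimple : IsSimpleGroup (S ⧸ Subgroup.center S))
    (hnonab : ∃ x y : S ⧸ Subgroup.center S, x * y ≠ y * x)
    (hlift : ∀ ψ : MulAut (S ⧸ Subgroup.center S), ∃ φ : MulAut S,
      ∀ x : S, ψ (QuotientGroup.mk x) = QuotientGroup.mk (φ x))
    (c : S × S → S)
    (hc1 : ∀ a b : S, Subgroup.closure {a, b} ≠ ⊤ → c (a, b) = 1)
    (hc2 : ∀ (φ : MulAut S) (z₁ z₂ : S), z₁ ∈ Subgroup.center S → z₂ ∈ Subgroup.center S →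
      ∀ a b : S, c (φ a * z₁, φ b * z₂) = φ (c (a, b))) :
    c ∈ Subgroup.closure
      ({fun p : S × S => p.1, fun p : S × S => p.2} : Set (S × S → S)) := by
  classical
  let sd : Setoid (S × S) := ⟨rel S, ⟨rel_refl, fun h => rel_symm h, fun h h' => rel_trans h h'⟩⟩
  let rep : S × S → S × S := fun p => (Quotient.mk sd p).out
  have hreprel : ∀ p, rel S (rep p) p := by
    intro p
    exact Quotient.exact (Quotient.out_eq (Quotient.mk sd p))
  have hrep_eq : ∀ p q, rel S p q → rep p = rep q := by
    intro p q h
    show (Quotient.mk sd p).out = (Quotient.mk sd q).out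
    rw [Quotient.sound (a := p) (b := q) h]
  have hrepidem : ∀ p, rep (rep p) = rep p := fun p => hrep_eq _ _ (hreprel p)
  set GenP : S × S → Prop := fun r => Subgroup.closure {r.1, r.2} = ⊤ with hGenP
  have hpick : ∀ r : S × S, GenP r →
      ∃ f : S × S → S, (f ∈ ⁅theH S, theH S⁆ ∧ ∀ p, ¬ rel S r p → f p = 1) ∧ f r = c r := by
    intro r hr
    have hcore := core hperf hsimple hnonab hlift (a := r.1) (b := r.2) hr
    have hcr : c (r.1, r.2) ∈ ((⁅theH S, theH S⁆ ⊓ Dsub S r.1 r.2)).map (ev S (r.1, r.2)) := by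
      rw [hcore]; trivial
    rw [Subgroup.mem_map] at hcr
    obtain ⟨f, hf, hfr⟩ := hcr
    rw [Subgroup.mem_inf] at hf
    refine ⟨f, ⟨hf.1, ?_⟩, ?_⟩
    · intro p hp
      have h2 : Dsub S r.1 r.2 ≤ (ev S p).ker := by
        apply iInf₂_le p
        rw [show ((r.1, r.2) : S × S) = r from rfl]
        exact hp
      exact h2 hf.2
    · show f r = c r
      have : ((r.1, r.2) : S × S) = r := rfl
      rw [← this]
      exact hfr
  let pick : S × S → (S × S → S) := fun r => if h : GenP r then (hpick r h).choose else 1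
  have hpick1 : ∀ r, GenP r → pick r ∈ ⁅theH S, theH S⁆ := by
    intro r h
    simp only [pick, dif_pos h]
    exact (hpick r h).choose_spec.1.1
  have hpick2 : ∀ r, GenP r → ∀ p, ¬ rel S r p → pick r p = 1 := by
    intro r h p hp
    simp only [pick, dif_pos h]
    exact (hpick r h).choose_spec.1.2 p hp
  have hpick3 : ∀ r, GenP r → pick r r = c r := by
    intro r h
    simp only [pick, dif_pos h]
    exact (hpick r h).choose_spec.2
  let R : Finset (S × S) := (Finset.univ.image rep).filter GenP
  have hRrep : ∀ r ∈ R, rep r = r := by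
    intro r hr
    obtain ⟨p', -, hp'⟩ := Finset.mem_image.mp (Finset.mem_filter.mp hr).1
    rw [← hp']
    exact hrepidem p'
  have hvanish : ∀ r ∈ R, ∀ p : S × S, ¬ rel S r p → pick r p = 1 := by
    intro r hr p hp
    exact hpick2 r (Finset.mem_filter.mp hr).2 p hp
  have hcomm : (R : Set (S × S)).Pairwise fun a b => Commute (pick a) (pick b) := by
    intro r hr r' hr' hne
    show pick r * pick r' = pick r' * pick r
    funext p
    show pick r p * pick r' p = pick r' p * pick r p
    by_cases hrel : rel S r p
    · have hno : ¬ rel S r' p := by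
        intro h'
        exact hne (by rw [← hRrep r hr, ← hRrep r' hr', hrep_eq r p hrel, hrep_eq r' p h'])
      rw [hvanish r' hr' p hno, mul_one, one_mul]
    · rw [hvanish r hr p hrel, mul_one, one_mul]
  let bigh : S × S → S := R.noncommProd pick hcomm
  have hhmem : bigh ∈ ⁅theH S, theH S⁆ :=
    Subgroup.noncommProd_mem _ _ (fun r hr => hpick1 r (Finset.mem_filter.mp hr).2)
  have hcoord : ∀ p, bigh p = c p := by
    intro p
    have happ : bigh p = R.noncommProd (fun r => pick r p)
        (fun _ hx _ hy h => (hcomm.of_refl hx hy).map (ev S p)) :=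
      Finset.map_noncommProd R pick hcomm (ev S p)
    by_cases hg : GenP p
    · have hgenrep : GenP (rep p) := by
        have := rel_gen hperf (rel_symm (hreprel p)) hg
        exact this
      have hr₀R : rep p ∈ R := Finset.mem_filter.mpr
        ⟨Finset.mem_image_of_mem rep (Finset.mem_univ p), hgenrep⟩
      have hsingle : ∀ r ∈ R, r ≠ rep p → pick r p = 1 := by
        intro r hrR hne
        apply hvanish r hrR
        intro hrel
        apply hne
        have h1 : rep r = rep p := hrep_eq r p hrel
        rw [← hRrep r hrR, h1]
      have herase : (R.erase (rep p)).noncommProd (fun r => pick r p)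
          (fun _ hx _ hy h => (hcomm.of_refl (R.mem_of_mem_erase hx)
            (R.mem_of_mem_erase hy)).map (ev S p)) = 1 := by
        exact (Finset.noncommProd_eq_pow_card _ _ _ 1
          (fun r hr => hsingle r (R.mem_of_mem_erase hr) (Finset.ne_of_mem_erase hr))).trans
          (one_pow _)
      have hsplit := Finset.mul_noncommProd_erase R hr₀R (fun r => pick r p)
        (fun _ hx _ hy h => (hcomm.of_refl hx hy).map (ev S p))
      rw [happ, ← hsplit, herase, mul_one]
      obtain ⟨φ, z₁, hz₁, z₂, hz₂, hpq⟩ := hreprel p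
      have h1 := commutator_coord φ hz₁ hz₂ (rep p) (hpick1 _ hgenrep)
      rw [← hpq] at h1
      have h2x := hc2 φ z₁ z₂ hz₁ hz₂ (rep p).1 (rep p).2
      rw [← hpq] at h2x
      have h2 : c p = φ (c (rep p)) := h2x
      rw [h1, hpick3 _ hgenrep]
      exact h2.symm
    · have hall : ∀ r ∈ R, pick r p = 1 := by
        intro r hrR
        apply hvanish r hrR
        intro hrel
        exact hg (rel_gen hperf hrel (Finset.mem_filter.mp hrR).2)
      rw [happ]
      refine ((Finset.noncommProd_eq_pow_card _ _ _ 1 hall).trans (one_pow _)).trans ?_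
      have hcp : c p = 1 := hc1 p.1 p.2 hg
      rw [hcp]
  have hceq : bigh = c := funext hcoord
  rw [← hceq]
  have hle : ⁅theH S, theH S⁆ ≤ theH S := by
    rw [Subgroup.commutator_le]
    intro g₁ hg₁ g₂ hg₂
    rw [commutatorElement_def]
    exact mul_mem (mul_mem (mul_mem hg₁ hg₂) (inv_mem hg₁)) (inv_mem hg₂)
  exact hle hhmem
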